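/- Let 𝔖: G ↻ S be a refined G-semimatroid and let X ≤ Y in the poset Supp(I_𝔖) of supports of orbits of independent sets. Then δ_𝔖(X) divides δ_𝔖(Y). Consequently δ_𝔖 = lcm{δ_𝔖(B) : B a basis of the underlying quotient semimatroid}. -/
import Mathlib


attribute [local instance] Classical.propDecidable

/-- A (finite-rank) semimatroid on a ground set `S`: a simplicial complex `K` of
"central" finite subsets of `S` together with a rank function `ρ` satisfying the
semimatroid axioms of Ardila and Kawahara. -/
structure Semimatroid (S : Type*) [DecidableEq S] where
  K : Set (Finset S)
  ρ : Finset S → ℕ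
  empty_mem : ∅ ∈ K
  down : ∀ ⦃X Y : Finset S⦄, X ∈ K → Y ⊆ X → Y ∈ K
  rank_le_card : ∀ X ∈ K, ρ X ≤ X.card
  mono : ∀ ⦃X Y : Finset S⦄, Y ∈ K → X ⊆ Y → ρ X ≤ ρ Y
  submodular : ∀ ⦃X Y : Finset S⦄, X ∈ K → Y ∈ K → X ∪ Y ∈ K →
    ρ (X ∪ Y) + ρ (X ∩ Y) ≤ ρ X + ρ Y
  cr1 : ∀ ⦃X Y : Finset S⦄, X ∈ K → Y ∈ K → ρ X = ρ (X ∩ Y) → X ∪ Y ∈ K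
  cr2 : ∀ ⦃X Y : Finset S⦄, X ∈ K → Y ∈ K → ρ X < ρ Y →
    ∃ y ∈ Y, y ∉ X ∧ insert y X ∈ K

/-- The (pointwise, hence by translativity setwise) stabilizer of a central set. -/
noncomputable def stabOf (G : Type*) {S : Type*} [AddGroup G] [AddAction G S]
    (τ : Finset S) : AddSubgroup G :=
  ⨅ s ∈ τ, AddAction.stabilizer G s

/-- `δ_𝔖(X)` for the support `X` of the independent set `τ`: the index of
`H^{(X)} = ⊕_{s ∈ τ} stab_{G^{(X)}}(X ∖ {s})` inside `G^{(X)} = G/stab(X)`. -/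
noncomputable def deltaOf (G : Type*) {S : Type*} [AddCommGroup G] [AddAction G S]
    [DecidableEq S] (τ : Finset S) : ℕ :=
  AddSubgroup.index
    (⨆ s ∈ τ, (stabOf G (τ.erase s)).map (QuotientAddGroup.mk' (stabOf G τ)))

theorem stabOf_anti {G S : Type*} [AddGroup G] [AddAction G S] {α β : Finset S}
    (h : α ⊆ β) : stabOf G β ≤ stabOf G α :=
  le_iInf₂ fun s hs => iInf₂_le s (h hs)

theorem delta_dvd_of_subset {S G : Type*} [DecidableEq S] [AddCommGroup G] [AddAction G S]
    {α β : Finset S} (hαβ : α ⊆ β) : deltaOf G α ∣ deltaOf G β := by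
  set Nα := stabOf G α with hNα
  set Nβ := stabOf G β with hNβ
  have hN : Nβ ≤ Nα := stabOf_anti hαβ
  let π : G ⧸ Nβ →+ G ⧸ Nα :=
    QuotientAddGroup.map Nβ Nα (AddMonoidHom.id G) (fun g hg => hN hg)
  have hπ : ∀ g : G, π (QuotientAddGroup.mk' Nβ g) = QuotientAddGroup.mk' Nα g := by
    intro g; rfl
  have hπsurj : Function.Surjective π := by
    rintro ⟨g⟩; exact ⟨QuotientAddGroup.mk' Nβ g, hπ g⟩
  set Hβ : AddSubgroup (G ⧸ Nβ) :=
    ⨆ s ∈ β, (stabOf G (β.erase s)).map (QuotientAddGroup.mk' Nβ) with hHβ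
  set Hα : AddSubgroup (G ⧸ Nα) :=
    ⨆ s ∈ α, (stabOf G (α.erase s)).map (QuotientAddGroup.mk' Nα) with hHα
  have hH : Hβ ≤ Hα.comap π := by
    refine iSup₂_le fun s hs => ?_
    rintro _ ⟨g, hg, rfl⟩
    simp only [AddSubgroup.mem_comap, hπ]
    by_cases hsα : s ∈ α
    · have hg' : g ∈ stabOf G (α.erase s) :=
        stabOf_anti (Finset.erase_subset_erase s hαβ) hg
      exact (le_iSup₂ (f := fun s (_ : s ∈ α) =>
        (stabOf G (α.erase s)).map (QuotientAddGroup.mk' Nα)) s hsα) ⟨g, hg', rfl⟩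
    · have hsub : α ⊆ β.erase s := fun t ht =>
        Finset.mem_erase.2 ⟨fun h => hsα (h ▸ ht), hαβ ht⟩
      have hg' : g ∈ Nα := stabOf_anti hsub hg
      have : QuotientAddGroup.mk' Nα g = 0 := (QuotientAddGroup.eq_zero_iff g).2 hg'
      rw [this]; exact zero_mem _
  let f : (G ⧸ Nβ) ⧸ Hβ →+ (G ⧸ Nα) ⧸ Hα := QuotientAddGroup.map Hβ Hα π hH
  have hfsurj : Function.Surjective f := by
    rintro ⟨x⟩
    obtain ⟨y, rfl⟩ := hπsurj x
    exact ⟨QuotientAddGroup.mk' Hβ y, rfl⟩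
  exact AddSubgroup.card_dvd_of_surjective f hfsurj

theorem Semimatroid.rho_eq_of_no_increase {S : Type*} [DecidableEq S] (M : Semimatroid S)
    {Y A : Finset S} (hY : Y ∈ M.K) (hA : A ⊆ Y)
    (h : ∀ y ∈ Y, M.ρ (insert y A) = M.ρ A) : M.ρ Y = M.ρ A := by
  have key : ∀ n (B : Finset S), B.card = n → A ⊆ B → B ⊆ Y → M.ρ B = M.ρ A := by
    intro n
    induction n with
    | zero =>
      intro B hB hAB _
      obtain rfl : B = ∅ := Finset.card_eq_zero.1 hB
      rw [Finset.subset_empty.1 hAB]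
    | succ n ih =>
      intro B hB hAB hBY
      by_cases hBA : B ⊆ A
      · rw [Finset.Subset.antisymm hBA hAB]
      · obtain ⟨y, hyB, hyA⟩ : ∃ y ∈ B, y ∉ A := by
          by_contra hc; push_neg at hc; exact hBA hc
        set B0 := B.erase y with hB0
        have hAB0 : A ⊆ B0 := fun t ht =>
          Finset.mem_erase.2 ⟨fun h' => hyA (h' ▸ ht), hAB ht⟩
        have hB0Y : B0 ⊆ Y := (Finset.erase_subset _ _).trans hBY
        have hB0card : B0.card = n := by
          rw [hB0, Finset.card_erase_of_mem hyB, hB]; rfl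
        have ihB0 := ih B0 hB0card hAB0 hB0Y
        have hBK : B ∈ M.K := M.down hY hBY
        have hB0K : B0 ∈ M.K := M.down hY hB0Y
        have hyAK : insert y A ∈ M.K := M.down hBK (Finset.insert_subset hyB hAB)
        have hunion : B0 ∪ insert y A = B := by
          rw [Finset.union_insert, Finset.union_eq_left.mpr hAB0, Finset.insert_erase hyB]
        have hinter : B0 ∩ insert y A = A := by
          ext t
          simp only [Finset.mem_inter, Finset.mem_insert, Finset.mem_erase, hB0]
          constructor
          · rintro ⟨⟨hty, _⟩, rfl | ht⟩
            · exact absurd rfl hty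
            · exact ht
          · intro ht
            exact ⟨⟨fun h' => hyA (h' ▸ ht), hAB ht⟩, Or.inr ht⟩
        have hsub := M.submodular hB0K hyAK (by rw [hunion]; exact hBK)
        rw [hunion, hinter, ihB0, h y (hBY hyB)] at hsub
        have hge : M.ρ A ≤ M.ρ B := M.mono hBK hAB
        omega
  exact key Y.card Y rfl hA Finset.Subset.rfl

theorem Semimatroid.exists_insert_indep {S : Type*} [DecidableEq S] (M : Semimatroid S)
    {Y A : Finset S} (hY : Y ∈ M.K) (hA : A ⊆ Y) (hind : M.ρ A = A.card)
    (hlt : M.ρ A < M.ρ Y) :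
    ∃ y ∈ Y, y ∉ A ∧ M.ρ (insert y A) = (insert y A).card := by
  by_contra hc
  push_neg at hc
  have h : ∀ y ∈ Y, M.ρ (insert y A) = M.ρ A := by
    intro y hy
    by_cases hyA : y ∈ A
    · rw [Finset.insert_eq_self.2 hyA]
    · have hins : insert y A ⊆ Y := Finset.insert_subset hy hA
      have hK : insert y A ∈ M.K := M.down hY hins
      have h1 : M.ρ (insert y A) ≤ (insert y A).card := M.rank_le_card _ hK
      have h2 : M.ρ A ≤ M.ρ (insert y A) := M.mono hK (Finset.subset_insert _ _)
      have hcard : (insert y A).card = A.card + 1 := Finset.card_insert_of_notMem hyA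
      have hne := hc y hy hyA
      omega
  exact absurd (M.rho_eq_of_no_increase hY hA h) (by omega)

/-- Any independent set extends to an independent set of maximal rank `d`. -/
theorem Semimatroid.exists_basis_ext {S : Type*} [DecidableEq S] (M : Semimatroid S)
    (d : ℕ) (hd : ∀ X ∈ M.K, M.ρ X ≤ d) (hd' : ∃ X ∈ M.K, M.ρ X = d)
    {α : Finset S} (hα : α ∈ M.K) (hαind : M.ρ α = α.card) :
    ∃ β' : Finset S, β' ∈ M.K ∧ M.ρ β' = β'.card ∧ α ⊆ β' ∧ M.ρ β' = d := by
  obtain ⟨Z, hZ, hZd⟩ := hd'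
  -- step 1: find W ∈ K with α ⊆ W and ρ W = d
  have step1 : ∃ W ∈ M.K, α ⊆ W ∧ M.ρ W = d := by
    have key : ∀ n (W : Finset S), (Z \ W).card ≤ n → W ∈ M.K → α ⊆ W →
        ∃ W' ∈ M.K, α ⊆ W' ∧ M.ρ W' = d := by
      intro n
      induction n with
      | zero =>
        intro W hn hW hαW
        have hZW : Z ⊆ W := by
          intro t ht
          by_contra htW
          have : t ∈ Z \ W := Finset.mem_sdiff.2 ⟨ht, htW⟩
          have := Finset.card_pos.2 ⟨t, this⟩
          omega
        exact ⟨W, hW, hαW, le_antisymm (hd W hW) (hZd ▸ M.mono hW hZW)⟩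
      | succ n ih =>
        intro W hn hW hαW
        by_cases hWd : M.ρ W = d
        · exact ⟨W, hW, hαW, hWd⟩
        · have hlt : M.ρ W < M.ρ Z := by
            have := hd W hW; omega
          obtain ⟨y, hyZ, hyW, hins⟩ := M.cr2 hW hZ hlt
          refine ih (insert y W) ?_ hins (hαW.trans (Finset.subset_insert _ _))
          have hss : Z \ insert y W ⊂ Z \ W := by
            refine Finset.ssubset_iff_of_subset (Finset.sdiff_subset_sdiff
              Finset.Subset.rfl (Finset.subset_insert _ _)) |>.2 ?_
            exact ⟨y, Finset.mem_sdiff.2 ⟨hyZ, hyW⟩,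
              fun hc => (Finset.mem_sdiff.1 hc).2 (Finset.mem_insert_self _ _)⟩
          have := Finset.card_lt_card hss
          omega
    exact key (Z \ α).card α le_rfl hα (fun _ h => h)
  obtain ⟨W, hW, hαW, hWd⟩ := step1
  -- step 2: grow α inside W
  have step2 : ∀ n (A : Finset S), A ⊆ W → M.ρ A = A.card → d - A.card ≤ n →
      ∃ β' : Finset S, β' ∈ M.K ∧ M.ρ β' = β'.card ∧ A ⊆ β' ∧ M.ρ β' = d := by
    intro n
    induction n with
    | zero =>
      intro A hAW hAind hn
      have hAK : A ∈ M.K := M.down hW hAW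
      have h1 : M.ρ A ≤ d := hd A hAK
      have h2 : M.ρ A = d := by omega
      exact ⟨A, hAK, hAind, Finset.Subset.rfl, h2⟩
    | succ n ih =>
      intro A hAW hAind hn
      by_cases hAd : M.ρ A = d
      · exact ⟨A, M.down hW hAW, hAind, Finset.Subset.rfl, hAd⟩
      · have hAK : A ∈ M.K := M.down hW hAW
        have hlt : M.ρ A < M.ρ W := by
          have := hd A hAK; omega
        obtain ⟨y, hyW, hyA, hind'⟩ := M.exists_insert_indep hW hAW hAind hlt
        have hsub : insert y A ⊆ W := Finset.insert_subset hyW hAW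
        have hcard : (insert y A).card = A.card + 1 := Finset.card_insert_of_notMem hyA
        obtain ⟨β', h1, h2, h3, h4⟩ := ih (insert y A) hsub hind' (by omega)
        exact ⟨β', h1, h2, (Finset.subset_insert _ _).trans h3, h4⟩
  obtain ⟨β', h1, h2, h3, h4⟩ := step2 (d - α.card) α hαW hαind le_rfl
  exact ⟨β', h1, h2, h3, h4⟩

/-- Let `𝔖 : G ↻ S` be a refined `G`-semimatroid and let `X ≤ Y`
in the poset `Supp(I_𝔖)` of supports of orbits of independent sets (represented by
nested independent central sets `α ⊆ β`).  Then `δ_𝔖(X)` divides `δ_𝔖(Y)`.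
Consequently `δ_𝔖` is the lcm of the `δ_𝔖(B)` over the bases `B` of the underlying
quotient semimatroid: every independent `α` extends to a basis `β'` with
`δ_𝔖(supp α) ∣ δ_𝔖(supp β')`. -/
theorem delta_divides_of_le
    {S G : Type*} [DecidableEq S]
    [AddCommGroup G] [Module.Free ℤ G] [Module.Finite ℤ G] [AddAction G S]
    (M : Semimatroid S)
    (hK : ∀ (g : G), ∀ X ∈ M.K, X.image (fun s => g +ᵥ s) ∈ M.K)
    (hρinv : ∀ (g : G), ∀ X ∈ M.K, M.ρ (X.image (fun s => g +ᵥ s)) = M.ρ X)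
    (hfin : Set.Finite {O : Set (Finset S) |
        ∃ X ∈ M.K, O = {Y : Finset S | ∃ g : G, Y = X.image (fun s => g +ᵥ s)}})
    (htrans : ∀ (s : S) (g : G), ({s, g +ᵥ s} : Finset S) ∈ M.K → g +ᵥ s = s)
    (d k : ℕ) (hd : ∀ X ∈ M.K, M.ρ X ≤ d) (hd' : ∃ X ∈ M.K, M.ρ X = d)
    (href : ∀ X ∈ M.K,
        (∃ C : AddSubgroup G, IsCompl (stabOf G X) C) ∧
          Module.finrank ℤ (stabOf G X) = k * (d - M.ρ X))
    (α β : Finset S) (hβ : β ∈ M.K) (hαβ : α ⊆ β)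
    (hαind : M.ρ α = α.card) (hβind : M.ρ β = β.card) :
    deltaOf G α ∣ deltaOf G β ∧
    ∃ β' : Finset S, β' ∈ M.K ∧ M.ρ β' = β'.card ∧ α ⊆ β' ∧ M.ρ β' = d ∧
      deltaOf G α ∣ deltaOf G β' := by
  have part1 : deltaOf G α ∣ deltaOf G β := delta_dvd_of_subset hαβ
  have hαK : α ∈ M.K := M.down hβ hαβ
  obtain ⟨β', h1, h2, h3, h4⟩ := M.exists_basis_ext d hd hd' hαK hαind
  exact ⟨part1, β', h1, h2, h3, h4, delta_dvd_of_subset h3⟩
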